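/- Let Σ be a nonempty finite set, let p ∈ Δ(Σ) have full support, and let ε ≥ 0. Consider maximizing the Shannon entropy H(r) = −Σ_{u∈Σ} r_u log r_u over {r ∈ Δ(Σ) : KL(r ‖ p) ≤ ε}. If ε ≥ KL(Unif ‖ p), where Unif is the uniform distribution on Σ, then Unif is a maximizer. If 0 ≤ ε ≤ KL(Unif ‖ p), then there exists α ∈ [0,1] such that the distribution r*(α) defined by r*(α)_u = p_u^α / Σ_{v∈Σ} p_v^α satisfies KL(r*(α) ‖ p) = ε and r*(α) is a maximizer. -/
import Mathlib


open Finset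

/-- The probability simplex on a finite type `V`. -/
def simplex (V : Type*) [Fintype V] : Set (V → ℝ) :=
  {q | (∀ u, 0 ≤ q u) ∧ ∑ u, q u = 1}

/-- KL divergence `KL(q ‖ p) = ∑ u, q u * log (q u / p u)`
(the convention `0 · log 0 = 0` holds automatically). -/
noncomputable def KL {V : Type*} [Fintype V] (q p : V → ℝ) : ℝ :=
  ∑ u, q u * Real.log (q u / p u)

/-- Shannon entropy `H(r) = −∑ u, r u * log (r u)`. -/
noncomputable def shannonEntropy {V : Type*} [Fintype V] (r : V → ℝ) : ℝ :=
  - ∑ u, r u * Real.log (r u)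

/-- The uniform distribution on `V`. -/
noncomputable def unif (V : Type*) [Fintype V] : V → ℝ :=
  fun _ => 1 / (Fintype.card V : ℝ)

/-- The tilted family `r*(α)_u = p_u^α / ∑ v, p_v^α`. -/
noncomputable def rStar {V : Type*} [Fintype V] (p : V → ℝ) (α : ℝ) : V → ℝ :=
  fun u => p u ^ α / ∑ v, p v ^ α

set_option linter.unusedSectionVars false

section aux
variable {V : Type*} [Fintype V]

lemma term_ineq {r q : ℝ} (hr : 0 ≤ r) (hq : 0 < q) :
    r * (Real.log q - Real.log r) ≤ q - r := by
  rcases eq_or_lt_of_le hr with h | h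
  · simp [← h]; positivity
  · have h1 : Real.log (q / r) ≤ q / r - 1 := Real.log_le_sub_one_of_pos (by positivity)
    have h2 : Real.log (q / r) = Real.log q - Real.log r :=
      Real.log_div (ne_of_gt hq) (ne_of_gt h)
    have h3 := mul_le_mul_of_nonneg_left h1 hr
    have h4 : r * (q / r - 1) = q - r := by field_simp
    rw [h2] at h3; linarith

lemma term_strict {r q : ℝ} (hr : 0 ≤ r) (hq : 0 < q) (hne : r ≠ q) :
    r * (Real.log q - Real.log r) < q - r := by
  rcases eq_or_lt_of_le hr with h | h
  · simp [← h]; positivity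
  · have hx : (0:ℝ) < q / r := by positivity
    have hx1 : q / r ≠ 1 := by
      intro h1
      exact hne (by field_simp at h1; linarith)
    have h1 : Real.log (q / r) < q / r - 1 := Real.log_lt_sub_one_of_pos hx hx1
    have h2 : Real.log (q / r) = Real.log q - Real.log r :=
      Real.log_div (ne_of_gt hq) (ne_of_gt h)
    have h3 := mul_lt_mul_of_pos_left h1 h
    have h4 : r * (q / r - 1) = q - r := by field_simp
    rw [h2] at h3; linarith

lemma gibbs (r q : V → ℝ) (hr0 : ∀ u, 0 ≤ r u) (hr1 : ∑ u, r u = 1)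
    (hq0 : ∀ u, 0 < q u) (hq1 : ∑ u, q u = 1) :
    ∑ u, r u * Real.log (q u) ≤ ∑ u, r u * Real.log (r u) := by
  have h : ∑ u, r u * (Real.log (q u) - Real.log (r u)) ≤ ∑ u : V, (q u - r u) :=
    Finset.sum_le_sum fun u _ => term_ineq (hr0 u) (hq0 u)
  rw [Finset.sum_sub_distrib, hr1, hq1] at h
  simp_rw [mul_sub, Finset.sum_sub_distrib] at h
  linarith

lemma gibbs_strict (r q : V → ℝ) (hr0 : ∀ u, 0 ≤ r u) (hr1 : ∑ u, r u = 1)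
    (hq0 : ∀ u, 0 < q u) (hq1 : ∑ u, q u = 1) {u0 : V} (hne : r u0 ≠ q u0) :
    ∑ u, r u * Real.log (q u) < ∑ u, r u * Real.log (r u) := by
  have h : ∑ u, r u * (Real.log (q u) - Real.log (r u)) < ∑ u : V, (q u - r u) :=
    Finset.sum_lt_sum (fun u _ => term_ineq (hr0 u) (hq0 u))
      ⟨u0, Finset.mem_univ u0, term_strict (hr0 u0) (hq0 u0) hne⟩
  rw [Finset.sum_sub_distrib, hr1, hq1] at h
  simp_rw [mul_sub, Finset.sum_sub_distrib] at h
  linarith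

lemma KL_eq (r p : V → ℝ) (hr0 : ∀ u, 0 ≤ r u) (hp0 : ∀ u, 0 < p u) :
    KL r p = ∑ u, r u * Real.log (r u) - ∑ u, r u * Real.log (p u) := by
  rw [KL, ← Finset.sum_sub_distrib]
  refine Finset.sum_congr rfl fun u _ => ?_
  rcases eq_or_lt_of_le (hr0 u) with h | h
  · simp [← h]
  · rw [Real.log_div (ne_of_gt h) (ne_of_gt (hp0 u))]; ring

lemma eq_of_KL_nonpos (r p : V → ℝ) (hr : r ∈ simplex V) (hp0 : ∀ u, 0 < p u)
    (hp1 : ∑ u, p u = 1) (h : KL r p ≤ 0) : r = p := by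
  by_contra hne
  obtain ⟨u0, hu0⟩ := Function.ne_iff.mp hne
  have hlt := gibbs_strict r p hr.1 hr.2 hp0 hp1 hu0
  rw [KL_eq r p hr.1 hp0] at h
  linarith

variable [Nonempty V]

lemma Zpos (p : V → ℝ) (hp0 : ∀ u, 0 < p u) (α : ℝ) : 0 < ∑ v, p v ^ α :=
  Finset.sum_pos (fun v _ => Real.rpow_pos_of_pos (hp0 v) α) Finset.univ_nonempty

lemma rStar_pos (p : V → ℝ) (hp0 : ∀ u, 0 < p u) (α : ℝ) (u : V) : 0 < rStar p α u :=
  div_pos (Real.rpow_pos_of_pos (hp0 u) α) (Zpos p hp0 α)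

lemma rStar_sum (p : V → ℝ) (hp0 : ∀ u, 0 < p u) (α : ℝ) : ∑ u, rStar p α u = 1 := by
  simp only [rStar]
  rw [← Finset.sum_div, div_self (ne_of_gt (Zpos p hp0 α))]

lemma rStar_mem (p : V → ℝ) (hp0 : ∀ u, 0 < p u) (α : ℝ) : rStar p α ∈ simplex V :=
  ⟨fun u => le_of_lt (rStar_pos p hp0 α u), rStar_sum p hp0 α⟩

lemma log_rStar (p : V → ℝ) (hp0 : ∀ u, 0 < p u) (α : ℝ) (u : V) :
    Real.log (rStar p α u) = α * Real.log (p u) - Real.log (∑ v, p v ^ α) := by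
  rw [rStar, Real.log_div (ne_of_gt (Real.rpow_pos_of_pos (hp0 u) α))
      (ne_of_gt (Zpos p hp0 α)), Real.log_rpow (hp0 u)]

lemma cross_rStar (p : V → ℝ) (hp0 : ∀ u, 0 < p u) (α : ℝ) (r : V → ℝ)
    (hr1 : ∑ u, r u = 1) :
    ∑ u, r u * Real.log (rStar p α u)
      = α * (∑ u, r u * Real.log (p u)) - Real.log (∑ v, p v ^ α) := by
  have h : ∀ u, r u * Real.log (rStar p α u)
      = α * (r u * Real.log (p u)) - Real.log (∑ v, p v ^ α) * r u := fun u => by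
    rw [log_rStar p hp0 α u]; ring
  simp_rw [h]
  rw [Finset.sum_sub_distrib, ← Finset.mul_sum, ← Finset.mul_sum, hr1, mul_one]

lemma f_cont (p : V → ℝ) (hp0 : ∀ u, 0 < p u) :
    Continuous fun α => KL (rStar p α) p := by
  unfold KL rStar
  apply continuous_finset_sum
  intro u _
  have hc : ∀ v : V, Continuous fun α : ℝ => p v ^ α := fun v =>
    Continuous.rpow continuous_const continuous_id fun _ => Or.inl (ne_of_gt (hp0 v))
  have hZ : Continuous fun α : ℝ => ∑ v, p v ^ α := continuous_finset_sum _ fun v _ => hc v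
  have hZne : ∀ α : ℝ, (∑ v, p v ^ α) ≠ 0 := fun α => ne_of_gt (Zpos p hp0 α)
  have hq : Continuous fun α : ℝ => p u ^ α / ∑ v, p v ^ α := (hc u).div hZ hZne
  exact hq.mul ((hq.div_const (p u)).log fun α =>
    ne_of_gt (div_pos (div_pos (Real.rpow_pos_of_pos (hp0 u) α) (Zpos p hp0 α)) (hp0 u)))

lemma rStar_one (p : V → ℝ) (hp1 : ∑ u, p u = 1) : rStar p 1 = p := by
  funext u
  simp [rStar, Real.rpow_one, hp1]

lemma rStar_zero (p : V → ℝ) : rStar p 0 = unif V := by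
  funext u
  simp [rStar, unif, Finset.card_univ]

lemma KL_self (p : V → ℝ) : KL p p = 0 := by
  unfold KL
  refine Finset.sum_eq_zero fun u _ => ?_
  rcases eq_or_ne (p u) 0 with h | h
  · simp [h]
  · simp [div_self h]

end aux

theorem stmt_8 {V : Type*} [Fintype V] [Nonempty V]
    (p : V → ℝ) (hp : p ∈ simplex V) (hppos : ∀ u, 0 < p u)
    (ε : ℝ) (hε : 0 ≤ ε) :
    -- if `ε ≥ KL(Unif ‖ p)`, the uniform distribution is a maximizer
    (KL (unif V) p ≤ ε →
      unif V ∈ simplex V ∧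
      ∀ r ∈ simplex V, KL r p ≤ ε → shannonEntropy r ≤ shannonEntropy (unif V)) ∧
    -- if `0 ≤ ε ≤ KL(Unif ‖ p)`, some `r*(α)` with `α ∈ [0,1]` saturates the
    -- constraint and is a maximizer
    (ε ≤ KL (unif V) p →
      ∃ α ∈ Set.Icc (0 : ℝ) 1,
        KL (rStar p α) p = ε ∧
        rStar p α ∈ simplex V ∧
        ∀ r ∈ simplex V, KL r p ≤ ε → shannonEntropy r ≤ shannonEntropy (rStar p α)) := by
  obtain ⟨hp0, hp1⟩ := hp
  have hcard : (0:ℝ) < (Fintype.card V : ℝ) := by exact_mod_cast Fintype.card_pos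
  have hunif_pos : ∀ u : V, 0 < unif V u := fun u => by
    simp only [unif]; positivity
  have hunif_sum : ∑ u : V, unif V u = 1 := by
    simp only [unif, Finset.sum_const, Finset.card_univ, nsmul_eq_mul]
    field_simp
  have hunif_mem : unif V ∈ simplex V := ⟨fun u => le_of_lt (hunif_pos u), hunif_sum⟩
  have hHunif : ∀ r ∈ simplex V, shannonEntropy r ≤ shannonEntropy (unif V) := by
    intro r hr
    have hg := gibbs r (unif V) hr.1 hr.2 hunif_pos hunif_sum
    have h1 : ∑ u, r u * Real.log (unif V u) = Real.log (1 / (Fintype.card V : ℝ)) := by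
      simp only [unif]
      rw [← Finset.sum_mul, hr.2, one_mul]
    have h2 : shannonEntropy (unif V) = - Real.log (1 / (Fintype.card V : ℝ)) := by
      simp only [shannonEntropy, unif, Finset.sum_const, Finset.card_univ, nsmul_eq_mul]
      rw [← mul_assoc, mul_one_div_cancel (ne_of_gt hcard), one_mul]
    rw [h1] at hg
    rw [h2]
    simp only [shannonEntropy]
    linarith
  constructor
  · intro _
    exact ⟨hunif_mem, fun r hr _ => hHunif r hr⟩
  · intro hge
    have hcont := f_cont p hppos
    have hf1 : KL (rStar p 1) p = 0 := by rw [rStar_one p hp1, KL_self]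
    have hf0 : KL (rStar p 0) p = KL (unif V) p := by rw [rStar_zero]
    obtain ⟨α, hα01, hfα⟩ : ∃ α ∈ Set.Icc (0:ℝ) 1, KL (rStar p α) p = ε := by
      have h := intermediate_value_Icc' (zero_le_one (α := ℝ)) hcont.continuousOn
      have hmem : ε ∈ Set.Icc (KL (rStar p (1:ℝ)) p) (KL (rStar p (0:ℝ)) p) := by
        rw [hf1, hf0]; exact ⟨hε, hge⟩
      obtain ⟨α, hα, h'⟩ := h hmem
      exact ⟨α, hα, h'⟩
    refine ⟨α, hα01, hfα, rStar_mem p hppos α, ?_⟩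
    intro r hr hKLr
    rcases eq_or_lt_of_le hα01.2 with h1 | h1
    · -- α = 1 : then ε = 0 and the only feasible point is p itself
      subst h1
      have hε0 : ε = 0 := by rw [← hfα, hf1]
      have hrp : r = p := eq_of_KL_nonpos r p hr hppos hp1 (by linarith)
      rw [hrp, rStar_one p hp1]
    · -- α < 1 : Lagrangian argument
      have hZ := Zpos p hppos α
      have hgb := gibbs r (rStar p α) hr.1 hr.2 (rStar_pos p hppos α) (rStar_sum p hppos α)
      have hcr := cross_rStar p hppos α r hr.2
      have hcq := cross_rStar p hppos α (rStar p α) (rStar_sum p hppos α)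
      have hKr := KL_eq r p hr.1 hppos
      have hKq := KL_eq (rStar p α) p (fun u => le_of_lt (rStar_pos p hppos α u)) hppos
      set A := ∑ u, r u * Real.log (r u) with hA
      set B := ∑ u, r u * Real.log (p u) with hB
      set C := ∑ u, rStar p α u * Real.log (rStar p α u) with hC
      set D := ∑ u, rStar p α u * Real.log (p u) with hD
      set L := Real.log (∑ v, p v ^ α) with hL
      rw [hcr] at hgb
      -- hgb : α * B - L ≤ A
      have hKq' : C - D = ε := by rw [← hKq]; exact hfα
      have hKr' : A - B ≤ ε := by rw [hKr] at hKLr; exact hKLr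
      have hαKr : α * A - α * B ≤ α * ε := by
        have := mul_le_mul_of_nonneg_left hKr' hα01.1
        linarith [mul_sub α A B]
      have hDe : D = C - ε := by linarith
      have hcq2 : C = α * C - α * ε - L := by
        rw [hDe] at hcq
        linarith [mul_sub α C ε]
      have key : (1 - α) * (-A) ≤ (1 - α) * (-C) := by nlinarith
      have hfin : -A ≤ -C := le_of_mul_le_mul_left key (by linarith)
      simp only [shannonEntropy]
      exact hfin
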